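/- Let q > 0. (i) For every f ∈ L¹(ℝ;ℂ) and every k ∈ ℝ, ∫_ℝ e^{-iky} ( (1/(2π)) ∫_ℝ (q/(q² + (y-t)²)) f(t) dt ) dy = (1/2) e^{-q|k|} f̂(k). (ii) Consequently, if f_R, f_r ∈ L¹(ℝ;ℂ) satisfy ∫ f_R + ∫ f_r = 0, then the functions G_R(y) = (1/(2π)) ∫_ℝ (q/(q² + (y-t)²)) f_r(t) dt and G_r(y) = (1/(2π)) ∫_ℝ (q/(q² + (y-t)²)) f_R(t) dt satisfy Ĝ_R(k) = (1/2) e^{-q|k|} f̂_r(k) and Ĝ_r(k) = (1/2) e^{-q|k|} f̂_R(k) for all k; in diagonalized form, (Ĝ_r - Ĝ_R)/√2 = -(1/2) e^{-q|k|} (f̂_r - f̂_R)/√2 and (Ĝ_r + Ĝ_R)/√2 = (1/2) e^{-q|k|} (f̂_r + f̂_R)/√2. -/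

import Mathlib

open MeasureTheory Set Real

noncomputable section

/-- The unnormalized Fourier transform `ĝ(k) = ∫ g(t) e^{-ikt} dt`. -/
def fourierHat (g : ℝ → ℂ) (k : ℝ) : ℂ :=
  ∫ t : ℝ, g t * Complex.exp (-(Complex.I * k * t))

/-- The Poisson-kernel convolution `(P_q * f)(y) = (1/(2π)) ∫ q/(q² + (y-t)²) f(t) dt`. -/
def poissonConv (q : ℝ) (f : ℝ → ℂ) (y : ℝ) : ℂ :=
  (1/(2*π) : ℝ) * ∫ t : ℝ, ((q / (q^2 + (y - t)^2) : ℝ) : ℂ) * f t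

open Filter FourierTransform

lemma aux_intOn_cexp {c : ℂ} (hc : c.re < 0) :
    IntegrableOn (fun x : ℝ => Complex.exp (c * x)) (Ioi (0:ℝ)) := by
  refine ((exp_neg_integrableOn_Ioi 0 (by linarith : (0:ℝ) < -c.re)).mono'
    ((Complex.continuous_exp.comp (by continuity)).aestronglyMeasurable) ?_)
  filter_upwards with x
  simp [Complex.norm_exp, Complex.mul_re]

lemma aux_int_cexp_Ioi {c : ℂ} (hc : c.re < 0) :
    ∫ x in Ioi (0:ℝ), Complex.exp (c * x) = -c⁻¹ := by
  have hc0 : c ≠ 0 := fun h => by simp [h] at hc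
  have h1 : Tendsto (fun b : ℝ => ∫ x in (0:ℝ)..b, Complex.exp (c * x)) atTop
      (nhds (∫ x in Ioi (0:ℝ), Complex.exp (c * x))) :=
    intervalIntegral_tendsto_integral_Ioi 0 (aux_intOn_cexp hc) tendsto_id
  have h2 : Tendsto (fun b : ℝ => ∫ x in (0:ℝ)..b, Complex.exp (c * x)) atTop (nhds (-c⁻¹)) := by
    have he : ∀ b : ℝ, (∫ x in (0:ℝ)..b, Complex.exp (c * x))
        = (Complex.exp (c * b) - 1) / c := by
      intro b; rw [integral_exp_mul_complex hc0]; simp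
    rw [show (fun b : ℝ => ∫ x in (0:ℝ)..b, Complex.exp (c * x))
        = fun b : ℝ => (Complex.exp (c * b) - 1) / c from funext he]
    have hlim : Tendsto (fun b : ℝ => Complex.exp (c * b)) atTop (nhds 0) := by
      rw [tendsto_zero_iff_norm_tendsto_zero]
      have h3 : Tendsto (fun b : ℝ => c.re * b) atTop atBot :=
        (tendsto_const_mul_atBot_of_neg hc).mpr tendsto_id
      have h4 := Real.tendsto_exp_atBot.comp h3
      refine h4.congr fun b => ?_
      simp [Complex.norm_exp, Complex.mul_re]
    have h5 : Tendsto (fun b : ℝ => (Complex.exp (c * b) - 1) / c) atTop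
        (nhds ((0 - 1) / c)) := ((hlim.sub tendsto_const_nhds).div_const c)
    have : ((0:ℂ) - 1) / c = -c⁻¹ := by ring
    rwa [this] at h5
  exact tendsto_nhds_unique h1 h2

lemma aux_intOn_neg {g : ℝ → ℂ} (hg : IntegrableOn g (Ioi (0:ℝ))) :
    IntegrableOn (fun x => g (-x)) (Iic (0:ℝ)) := by
  rw [integrableOn_Iic_iff_integrableOn_Iio]
  have A : MeasurableEmbedding fun x : ℝ => -x :=
    (Homeomorph.neg ℝ).isClosedEmbedding.measurableEmbedding
  have h1 : (volume : Measure ℝ).restrict (Iio 0)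
      = Measure.map (fun x : ℝ => -x) ((volume : Measure ℝ).restrict (Ioi 0)) := by
    rw [← Measure.map_neg_eq_self (volume : Measure ℝ)]
    rw [Measure.restrict_map A.measurable measurableSet_Iio]
    congr 1
    ext x; simp
  rw [IntegrableOn, h1, A.integrable_map_iff]
  exact hg.congr_fun (fun x _ => by simp [Function.comp]) measurableSet_Ioi

section
variable {q w : ℝ}

lemma aux_re1 (hq : 0 < q) : (-(q:ℂ) - Complex.I * w).re < 0 := by
  simp [Complex.sub_re, Complex.mul_re]; linarith

lemma aux_re2 (hq : 0 < q) : (-(q:ℂ) + Complex.I * w).re < 0 := by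
  simp [Complex.add_re, Complex.mul_re]; linarith

lemma aux_eq_pos (hq : 0 < q) : ∀ t ∈ Ioi (0:ℝ),
    ((Real.exp (-(q*|t|)) : ℝ) : ℂ) * Complex.exp (-(Complex.I * w * t))
      = Complex.exp ((-(q:ℂ) - Complex.I * w) * t) := by
  intro t ht
  rw [abs_of_pos ht, Complex.ofReal_exp, ← Complex.exp_add]
  congr 1
  push_cast
  ring

lemma aux_eq_neg (hq : 0 < q) : ∀ x ∈ Ioi (0:ℝ),
    ((Real.exp (-(q*|(-x)|)) : ℝ) : ℂ) * Complex.exp (-(Complex.I * w * (-x)))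
      = Complex.exp ((-(q:ℂ) + Complex.I * w) * x) := by
  intro x hx
  rw [abs_neg, abs_of_pos hx, Complex.ofReal_exp, ← Complex.exp_add]
  congr 1
  push_cast
  ring

lemma aux_phi_intOn_Ioi (hq : 0 < q) :
    IntegrableOn (fun t : ℝ => ((Real.exp (-(q*|t|)) : ℝ) : ℂ)
      * Complex.exp (-(Complex.I * w * t))) (Ioi (0:ℝ)) :=
  (aux_intOn_cexp (aux_re1 hq)).congr_fun (fun t ht => (aux_eq_pos hq t ht).symm)
    measurableSet_Ioi

lemma aux_phi_int (hq : 0 < q) :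
    Integrable (fun t : ℝ => ((Real.exp (-(q*|t|)) : ℝ) : ℂ)
      * Complex.exp (-(Complex.I * w * t))) := by
  have h2 : IntegrableOn (fun t : ℝ => ((Real.exp (-(q*|t|)) : ℝ) : ℂ)
      * Complex.exp (-(Complex.I * w * t))) (Iic (0:ℝ)) := by
    have := aux_intOn_neg ((aux_intOn_cexp (aux_re2 (w := w) hq)).congr_fun
      (fun x hx => (aux_eq_neg hq x hx).symm) measurableSet_Ioi)
    simpa using this
  have := h2.union (aux_phi_intOn_Ioi (w := w) hq)
  rwa [Iic_union_Ioi, integrableOn_univ] at this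

lemma aux_phi_val (hq : 0 < q) :
    (∫ t : ℝ, ((Real.exp (-(q*|t|)) : ℝ) : ℂ) * Complex.exp (-(Complex.I * w * t)))
      = ((2*q/(q^2+w^2) : ℝ) : ℂ) := by
  set φ := fun t : ℝ => ((Real.exp (-(q*|t|)) : ℝ) : ℂ) * Complex.exp (-(Complex.I * w * t))
  have h2 : IntegrableOn φ (Iic (0:ℝ)) := ((aux_phi_int (w := w) hq)).integrableOn
  have h3 : IntegrableOn φ (Ioi (0:ℝ)) := aux_phi_intOn_Ioi hq
  rw [← intervalIntegral.integral_Iic_add_Ioi h2 h3]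
  have hIoi : ∫ t in Ioi (0:ℝ), φ t = -(-(q:ℂ) - Complex.I * w)⁻¹ := by
    rw [setIntegral_congr_fun measurableSet_Ioi (aux_eq_pos hq)]
    exact aux_int_cexp_Ioi (aux_re1 hq)
  have hIic : ∫ t in Iic (0:ℝ), φ t = -(-(q:ℂ) + Complex.I * w)⁻¹ := by
    have h4 : ∫ t in Iic (0:ℝ), φ t = ∫ x in Ioi (-(0:ℝ)), φ (-x) := by
      rw [← integral_comp_neg_Iic]
      simp
    rw [h4]
    simp only [neg_zero]
    refine (setIntegral_congr_fun measurableSet_Ioi (fun x hx => ?_)).trans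
      (aux_int_cexp_Ioi (aux_re2 (w := w) hq))
    simpa [φ] using aux_eq_neg (w := w) hq x hx
  rw [hIic, hIoi]
  have hne : ((q:ℂ)^2 + (w:ℂ)^2) ≠ 0 := by
    have hpos : (0:ℝ) < q^2 + w^2 := by positivity
    have : ((q:ℂ)^2 + (w:ℂ)^2) = ((q^2 + w^2 : ℝ) : ℂ) := by push_cast; ring
    rw [this]
    exact_mod_cast Complex.ofReal_ne_zero.mpr (ne_of_gt hpos)
  have h1 : (-(q:ℂ) - Complex.I * w) ≠ 0 := by
    intro h
    have := congrArg Complex.re h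
    simp [Complex.sub_re, Complex.mul_re] at this
    nlinarith
  have h2' : (-(q:ℂ) + Complex.I * w) ≠ 0 := by
    intro h
    have := congrArg Complex.re h
    simp [Complex.add_re, Complex.mul_re] at this
    nlinarith
  push_cast
  field_simp
  ring_nf
  simp [Complex.I_sq]
end

section
variable {q : ℝ}

lemma aux_P_int (hq : 0 < q) : Integrable (fun u : ℝ => q/(q^2+u^2)) := by
  have h := (integrable_inv_one_add_sq.comp_mul_left' (show q⁻¹ ≠ 0 by positivity)).const_mul q⁻¹
  refine h.congr ?_
  filter_upwards with u
  have hq2 : q^2 + u^2 > 0 := by positivity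
  field_simp

lemma aux_FTreal_int (hq : 0 < q) :
    Integrable (fun w : ℝ => 2*q/(q^2+(2*π*w)^2)) := by
  have h := ((aux_P_int hq).const_mul 2).comp_mul_left'
    (show 2*π ≠ 0 by positivity)
  refine h.congr ?_
  filter_upwards with w
  ring_nf

lemma aux_g_FT (hq : 0 < q) (w : ℝ) :
    (𝓕 (fun t : ℝ => ((Real.exp (-(q*|t|)) : ℝ) : ℂ))) w
      = ((2*q/(q^2+(2*π*w)^2) : ℝ) : ℂ) := by
  rw [Real.fourier_real_eq_integral_exp_smul]
  rw [← aux_phi_val (w := 2*π*w) hq]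
  apply integral_congr_ae
  filter_upwards with v
  rw [smul_eq_mul, mul_comm]
  congr 2
  push_cast
  ring

lemma aux_key (hq : 0 < q) (k : ℝ) :
    (∫ u : ℝ, ((q/(q^2+u^2) : ℝ) : ℂ) * Complex.exp (-(Complex.I * k * u)))
      = ((π * Real.exp (-(q*|k|)) : ℝ) : ℂ) := by
  have hcont : Continuous (fun t : ℝ => ((Real.exp (-(q*|t|)) : ℝ) : ℂ)) :=
    Complex.continuous_ofReal.comp (Real.continuous_exp.comp
      ((continuous_const.mul continuous_abs).neg))
  have hgint : Integrable (fun t : ℝ => ((Real.exp (-(q*|t|)) : ℝ) : ℂ)) := by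
    have := aux_phi_int (w := 0) hq
    simpa using this
  have hFeq : 𝓕 (fun t : ℝ => ((Real.exp (-(q*|t|)) : ℝ) : ℂ))
      = fun w : ℝ => ((2*q/(q^2+(2*π*w)^2) : ℝ) : ℂ) := funext (aux_g_FT hq)
  have hFi : Integrable (𝓕 (fun t : ℝ => ((Real.exp (-(q*|t|)) : ℝ) : ℂ))) := by
    rw [hFeq]; exact (aux_FTreal_int hq).ofReal
  have hinv := hcont.fourierInv_fourier_eq hgint hFi
  have h1 := congrFun hinv (-k)
  rw [Real.fourierInv_eq', hFeq] at h1
  simp only [RCLike.inner_apply, conj_trivial, mul_comm (-k)] at h1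
  -- h1 : ∫ v, cexp (↑(2π*(v * -k)) * I) • ofReal (2q/(q²+(2πv)²)) = ofReal (rexp (-(q*|-k|)))
  set G : ℝ → ℂ := fun u => Complex.exp (↑(u * -k) * Complex.I) * ((2*q/(q^2+u^2) : ℝ) : ℂ)
    with hG
  have h2 : (∫ v : ℝ, G ((2*π) * v)) = |(2*π)⁻¹| • ∫ u : ℝ, G u :=
    Measure.integral_comp_mul_left G (2*π)
  have h3 : (∫ v : ℝ, Complex.exp (↑(2 * π * (v * -k)) * Complex.I)
      • ((2*q/(q^2+(2*π*v)^2) : ℝ) : ℂ)) = ∫ v : ℝ, G ((2*π) * v) := by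
    apply integral_congr_ae
    filter_upwards with v
    rw [hG, smul_eq_mul]
    dsimp only
    congr 3 <;> ring
  rw [h3, h2] at h1
  have hpi : (0:ℝ) < 2*π := by positivity
  rw [abs_of_pos (inv_pos.mpr hpi)] at h1
  have h4 : (∫ u : ℝ, G u) = 2 * ∫ u : ℝ, ((q/(q^2+u^2) : ℝ) : ℂ)
      * Complex.exp (-(Complex.I * k * u)) := by
    rw [← integral_const_mul]
    apply integral_congr_ae
    filter_upwards with u
    rw [hG]
    dsimp only
    have e1 : ((2*q/(q^2+u^2) : ℝ) : ℂ) = 2 * ((q/(q^2+u^2) : ℝ) : ℂ) := by push_cast; ring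
    have e2 : (↑(u * -k) * Complex.I) = -(Complex.I * k * u) := by push_cast; ring
    rw [e1, e2]
    ring
  rw [h4, Complex.real_smul] at h1
  rw [abs_neg] at h1
  field_simp at h1
  push_cast at h1
  simp only [one_div, mul_assoc] at h1
  rw [inv_mul_eq_iff_eq_mul₀ (show (2*(π:ℂ)) ≠ 0 by
    exact_mod_cast Complex.ofReal_ne_zero.mpr (ne_of_gt hpi))] at h1
  push_cast
  ring_nf at h1 ⊢
  have hsame : (∫ (u : ℝ), (q:ℂ) / ((q:ℂ) ^ 2 + (u:ℂ) ^ 2) * Complex.exp (-(Complex.I * k * u)))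
      = ∫ (u : ℝ), (q:ℂ) * Complex.exp (-(Complex.I * k * u)) * ((q:ℂ) ^ 2 + (u:ℂ) ^ 2)⁻¹ :=
    integral_congr_ae (Filter.Eventually.of_forall fun u => by ring)
  have hsame2 : (∫ (u : ℝ), (q:ℂ) * ((q:ℂ) ^ 2 + (u:ℂ) ^ 2)⁻¹ * Complex.exp (-(Complex.I * k * u)))
      = ∫ (u : ℝ), (q:ℂ) * ((q:ℂ) ^ 2 + (u:ℂ) ^ 2)⁻¹ * Complex.exp (-(u * Complex.I * k)) :=
    integral_congr_ae (Filter.Eventually.of_forall fun u => by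
      dsimp only
      rw [show -(Complex.I * k * u) = -(u * Complex.I * k) by ring])
  linear_combination h1/2 + hsame2
end


lemma aux_main {q : ℝ} (hq : 0 < q) (f : ℝ → ℂ) (hf : Integrable f) (k : ℝ) :
    (∫ y : ℝ, Complex.exp (-(Complex.I * k * y)) * poissonConv q f y)
      = ((1/2 * Real.exp (-(q * |k|)) : ℝ) : ℂ) * fourierHat f k := by
  set P : ℝ → ℂ := fun u => ((q/(q^2+u^2) : ℝ) : ℂ) with hP
  have hPint : Integrable P := (aux_P_int hq).ofReal
  have hprod : Integrable (fun p : ℝ × ℝ => f p.2 * P (p.1 - p.2))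
      ((volume : Measure ℝ).prod (volume : Measure ℝ)) := by
    have := hf.convolution_integrand (ContinuousLinearMap.mul ℝ ℂ) hPint
    simpa using this
  have hprod2 : Integrable (fun p : ℝ × ℝ =>
      Complex.exp (-(Complex.I * k * p.1)) * (f p.2 * P (p.1 - p.2)))
      ((volume : Measure ℝ).prod (volume : Measure ℝ)) := by
    refine hprod.bdd_mul (c := 1) ?_ (Eventually.of_forall fun p => ?_)
    · apply Continuous.aestronglyMeasurable
      continuity
    · rw [Complex.norm_exp]
      simp [Complex.mul_re]
  have hswap : (∫ y : ℝ, ∫ t : ℝ, Complex.exp (-(Complex.I * k * y)) * (f t * P (y - t)))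
      = ∫ t : ℝ, ∫ y : ℝ, Complex.exp (-(Complex.I * k * y)) * (f t * P (y - t)) :=
    integral_integral_swap hprod2
  have hshift : ∀ t : ℝ, (∫ y : ℝ, Complex.exp (-(Complex.I * k * y)) * P (y - t))
      = Complex.exp (-(Complex.I * k * t)) * ((π * Real.exp (-(q*|k|)) : ℝ) : ℂ) := by
    intro t
    rw [← integral_add_right_eq_self (fun y : ℝ => Complex.exp (-(Complex.I * k * y)) * P (y - t)) t]
    simp only [add_sub_cancel_right]
    rw [← aux_key hq k, ← integral_const_mul]
    apply integral_congr_ae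
    filter_upwards with x
    have e1 : (-(Complex.I * k * (x + t : ℝ))) = -(Complex.I * k * t) + -(Complex.I * k * x) := by
      push_cast; ring
    rw [e1, Complex.exp_add]
    ring
  calc (∫ y : ℝ, Complex.exp (-(Complex.I * k * y)) * poissonConv q f y)
      = ∫ y : ℝ, ((1/(2*π) : ℝ) : ℂ) * ∫ t : ℝ,
          Complex.exp (-(Complex.I * k * y)) * (f t * P (y - t)) := by
        apply integral_congr_ae
        filter_upwards with y
        rw [poissonConv, mul_left_comm, ← integral_const_mul]
        congr 1
        apply integral_congr_ae
        filter_upwards with t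
        ring
    _ = ((1/(2*π) : ℝ) : ℂ) * ∫ y : ℝ, ∫ t : ℝ,
          Complex.exp (-(Complex.I * k * y)) * (f t * P (y - t)) := integral_const_mul _ _
    _ = ((1/(2*π) : ℝ) : ℂ) * ∫ t : ℝ, f t * ∫ y : ℝ,
          Complex.exp (-(Complex.I * k * y)) * P (y - t) := by
        rw [hswap]
        congr 1
        apply integral_congr_ae
        filter_upwards with t
        rw [← integral_const_mul]
        apply integral_congr_ae
        filter_upwards with y
        ring
    _ = ((1/(2*π) : ℝ) : ℂ) * (((π * Real.exp (-(q*|k|)) : ℝ) : ℂ)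
          * ∫ t : ℝ, f t * Complex.exp (-(Complex.I * k * t))) := by
        congr 1
        rw [← integral_const_mul]
        apply integral_congr_ae
        filter_upwards with t
        rw [hshift t]
        ring
    _ = ((1/2 * Real.exp (-(q * |k|)) : ℝ) : ℂ) * fourierHat f k := by
        rw [fourierHat, ← mul_assoc]
        congr 1
        push_cast
        have : (π : ℂ) ≠ 0 := by exact_mod_cast Complex.ofReal_ne_zero.mpr Real.pi_ne_zero
        field_simp

/-- (i) The Fourier transform of the Poisson-kernel convolution:
`∫ e^{-iky} (P_q * f)(y) dy = (1/2) e^{-q|k|} f̂(k)` for `f ∈ L¹`. (ii) Consequently the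
frequency-domain realization of the Neumann–Poincaré operator of the crescent domain:
for mean-zero `f_R, f_r ∈ L¹`, the functions `G_R = P_q * f_r` and `G_r = P_q * f_R`
satisfy `Ĝ_R = (1/2)e^{-q|k|} f̂_r` and `Ĝ_r = (1/2)e^{-q|k|} f̂_R`, and in diagonalized
form `(Ĝ_r - Ĝ_R)/√2 = -(1/2)e^{-q|k|}(f̂_r - f̂_R)/√2` and
`(Ĝ_r + Ĝ_R)/√2 = (1/2)e^{-q|k|}(f̂_r + f̂_R)/√2`. -/
theorem poisson_kernel_fourier_and_crescent_NP_frequency (q : ℝ) (hq : 0 < q) :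
    (∀ f : ℝ → ℂ, Integrable f → ∀ k : ℝ,
      (∫ y : ℝ, Complex.exp (-(Complex.I * k * y)) * poissonConv q f y)
        = ((1/2 * Real.exp (-(q * |k|)) : ℝ) : ℂ) * fourierHat f k) ∧
    (∀ fR fr : ℝ → ℂ, Integrable fR → Integrable fr →
      (∫ t : ℝ, fR t) + (∫ t : ℝ, fr t) = 0 →
      ∀ k : ℝ,
        fourierHat (poissonConv q fr) k
          = ((1/2 * Real.exp (-(q * |k|)) : ℝ) : ℂ) * fourierHat fr k ∧
        fourierHat (poissonConv q fR) k
          = ((1/2 * Real.exp (-(q * |k|)) : ℝ) : ℂ) * fourierHat fR k ∧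
        (fourierHat (poissonConv q fR) k - fourierHat (poissonConv q fr) k)
            / ((Real.sqrt 2 : ℝ) : ℂ)
          = -((1/2 * Real.exp (-(q * |k|)) : ℝ) : ℂ) *
              ((fourierHat fr k - fourierHat fR k) / ((Real.sqrt 2 : ℝ) : ℂ)) ∧
        (fourierHat (poissonConv q fR) k + fourierHat (poissonConv q fr) k)
            / ((Real.sqrt 2 : ℝ) : ℂ)
          = ((1/2 * Real.exp (-(q * |k|)) : ℝ) : ℂ) *
              ((fourierHat fR k + fourierHat fr k) / ((Real.sqrt 2 : ℝ) : ℂ))) := by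
  have hmain : ∀ f : ℝ → ℂ, Integrable f → ∀ k : ℝ,
      (∫ y : ℝ, Complex.exp (-(Complex.I * k * y)) * poissonConv q f y)
        = ((1/2 * Real.exp (-(q * |k|)) : ℝ) : ℂ) * fourierHat f k :=
    fun f hf k => aux_main hq f hf k
  refine ⟨hmain, ?_⟩
  intro fR fr hfR hfr _hzero k
  have hhat : ∀ f : ℝ → ℂ, Integrable f →
      fourierHat (poissonConv q f) k
        = ((1/2 * Real.exp (-(q * |k|)) : ℝ) : ℂ) * fourierHat f k := by
    intro f hf
    rw [fourierHat, ← hmain f hf k]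
    apply integral_congr_ae
    filter_upwards with t
    ring
  have h1 := hhat fr hfr
  have h2 := hhat fR hfR
  refine ⟨h1, h2, ?_, ?_⟩
  · rw [h1, h2]; ring
  · rw [h1, h2]; ring
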